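/- arXiv:1401.2625 — 4 statements merged into one kernel-verified Lean document; each statement's English description precedes it below -/
import Mathlib

section
/- Let V, U, Z be real Banach spaces and δ₀ ∈ U. Let u : U → V be Fréchet differentiable at δ₀, let E : V × U → Z be Fréchet differentiable at (u(δ₀), δ₀) and satisfy E(u(δ), δ) = 0 for all δ ∈ U, and let J : V × U → ℝ be Fréchet differentiable at (u(δ₀), δ₀). Suppose ζ ∈ Z* (a continuous linear functional on Z) solves the adjoint equation: for every v ∈ V, (∂J/∂u)(u(δ₀),δ₀)[v] + ζ((∂E/∂u)(u(δ₀),δ₀)[v]) = 0. Then the reduced functional J̃(δ) = J(u(δ), δ) is Fréchet differentiable at δ₀ and, for every q ∈ U, J̃′(δ₀)[q] = (∂J/∂δ)(u(δ₀),δ₀)[q] + ζ((∂E/∂δ)(u(δ₀),δ₀)[q]). -/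
/-- Adjoint-method formula for the derivative of the reduced functional
`J̃(δ) = J(u(δ), δ)`: if `ζ` solves the adjoint equation
`(∂J/∂u)[v] + ζ((∂E/∂u)[v]) = 0` for all `v`, then `J̃` is Fréchet
differentiable at `δ₀` and `J̃′(δ₀)[q] = (∂J/∂δ)[q] + ζ((∂E/∂δ)[q])`. -/
theorem adjoint_method_reduced_gradient
    {V U Z : Type*}
    [NormedAddCommGroup V] [NormedSpace ℝ V] [CompleteSpace V]
    [NormedAddCommGroup U] [NormedSpace ℝ U] [CompleteSpace U]
    [NormedAddCommGroup Z] [NormedSpace ℝ Z] [CompleteSpace Z]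
    (δ₀ : U) (u : U → V) (E : V × U → Z) (J : V × U → ℝ)
    (u' : U →L[ℝ] V) (E' : V × U →L[ℝ] Z) (J' : V × U →L[ℝ] ℝ)
    (hu : HasFDerivAt u u' δ₀)
    (hE : HasFDerivAt E E' (u δ₀, δ₀))
    (hEconstr : ∀ δ : U, E (u δ, δ) = 0)
    (hJ : HasFDerivAt J J' (u δ₀, δ₀))
    (ζ : Z →L[ℝ] ℝ)
    (hadj : ∀ v : V, J' (v, 0) + ζ (E' (v, 0)) = 0) :
    ∃ D : U →L[ℝ] ℝ, HasFDerivAt (fun δ : U => J (u δ, δ)) D δ₀ ∧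
      ∀ q : U, D q = J' (0, q) + ζ (E' (0, q)) := by
  have hφ : HasFDerivAt (fun δ : U => (u δ, δ)) (u'.prod (ContinuousLinearMap.id ℝ U)) δ₀ :=
    HasFDerivAt.prodMk hu (hasFDerivAt_id δ₀)
  have hJcomp := HasFDerivAt.comp (f := fun δ : U => (u δ, δ)) δ₀ hJ hφ
  have hEc := HasFDerivAt.comp (f := fun δ : U => (u δ, δ)) δ₀ hE hφ
  have hE0 : E'.comp (u'.prod (ContinuousLinearMap.id ℝ U)) = (0 : U →L[ℝ] Z) := by
    have : HasFDerivAt (fun δ : U => E (u δ, δ)) (0 : U →L[ℝ] Z) δ₀ := by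
      simp only [hEconstr]
      exact hasFDerivAt_const 0 δ₀
    exact hEc.unique this
  refine ⟨J'.comp (u'.prod (ContinuousLinearMap.id ℝ U)), hJcomp, fun q => ?_⟩
  have h0 : E' (u' q, q) = (0 : Z) := by
    have := congrArg (fun f : U →L[ℝ] Z => f q) hE0
    simpa using this
  have hsplit : (u' q, q) = ((u' q, (0 : U)) : V × U) + ((0 : V), q) := by simp
  have hJs : J' (u' q, q) = J' (u' q, 0) + J' (0, q) := by
    rw [hsplit, map_add]
  have hEs : E' (u' q, q) = E' (u' q, 0) + E' (0, q) := by
    rw [hsplit, map_add]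
  have hadjq := hadj (u' q)
  simp only [ContinuousLinearMap.comp_apply, ContinuousLinearMap.prod_apply,
    ContinuousLinearMap.id_apply]
  have : ζ (E' (u' q, 0)) + ζ (E' (0, q)) = (0 : ℝ) := by
    rw [← map_add, ← hEs, h0, map_zero]
  linarith [hJs, hadjq, this]
end

section
/- Let V, U, Z be real Banach spaces and δ₀ ∈ U. Let u : U → V be Fréchet differentiable at δ₀, let E : V × U → Z be Fréchet differentiable at (u(δ₀), δ₀) with E(u(δ), δ) = 0 for all δ ∈ U, and let J : V × U → ℝ be Fréchet differentiable at (u(δ₀), δ₀). Assume further that T = (∂E/∂u)(u(δ₀),δ₀) : V → Z is a continuous linear isomorphism with continuous inverse T⁻¹. Then the reduced functional J̃(δ) = J(u(δ), δ) is Fréchet differentiable at δ₀ and, for every q ∈ U, J̃′(δ₀)[q] = (∂J/∂δ)(u(δ₀),δ₀)[q] − (∂J/∂u)(u(δ₀),δ₀)[ T⁻¹((∂E/∂δ)(u(δ₀),δ₀)[q]) ]. -/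
/-- Sensitivity formula for the derivative of the reduced functional
`J̃(δ) = J(u(δ), δ)` when `T = (∂E/∂u)(u(δ₀),δ₀)` is a continuous linear
isomorphism: `J̃′(δ₀)[q] = (∂J/∂δ)[q] − (∂J/∂u)[T⁻¹((∂E/∂δ)[q])]`. -/
theorem reduced_gradient_via_inverse
    {V U Z : Type*}
    [NormedAddCommGroup V] [NormedSpace ℝ V] [CompleteSpace V]
    [NormedAddCommGroup U] [NormedSpace ℝ U] [CompleteSpace U]
    [NormedAddCommGroup Z] [NormedSpace ℝ Z] [CompleteSpace Z]
    (δ₀ : U) (u : U → V) (E : V × U → Z) (J : V × U → ℝ)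
    (u' : U →L[ℝ] V) (E' : V × U →L[ℝ] Z) (J' : V × U →L[ℝ] ℝ)
    (hu : HasFDerivAt u u' δ₀)
    (hE : HasFDerivAt E E' (u δ₀, δ₀))
    (hEconstr : ∀ δ : U, E (u δ, δ) = 0)
    (hJ : HasFDerivAt J J' (u δ₀, δ₀))
    (T : V ≃L[ℝ] Z)
    (hT : ∀ v : V, T v = E' (v, 0)) :
    ∃ D : U →L[ℝ] ℝ, HasFDerivAt (fun δ : U => J (u δ, δ)) D δ₀ ∧
      ∀ q : U, D q = J' (0, q) - J' (T.symm (E' (0, q)), 0) := by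
  have hid : HasFDerivAt (fun δ : U => δ) (ContinuousLinearMap.id ℝ U) δ₀ :=
    hasFDerivAt_id δ₀
  have hpair : HasFDerivAt (fun δ : U => (u δ, δ))
      (u'.prod (ContinuousLinearMap.id ℝ U)) δ₀ := HasFDerivAt.prodMk hu hid
  -- derivative of the constraint is zero
  have hEcomp : HasFDerivAt (fun δ : U => E (u δ, δ))
      (E'.comp (u'.prod (ContinuousLinearMap.id ℝ U))) δ₀ := by
    have := HasFDerivAt.comp (g := E) (f := fun δ : U => (u δ, δ)) δ₀ hE hpair
    exact this
  have hzero : HasFDerivAt (fun δ : U => E (u δ, δ)) (0 : U →L[ℝ] Z) δ₀ := by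
    have : (fun δ : U => E (u δ, δ)) = fun _ => (0 : Z) := funext hEconstr
    rw [this]
    exact hasFDerivAt_const 0 δ₀
  have heq : E'.comp (u'.prod (ContinuousLinearMap.id ℝ U)) = 0 :=
    hEcomp.unique hzero
  have hu'q : ∀ q : U, u' q = - T.symm (E' (0, q)) := by
    intro q
    have h0 : E' (u' q, q) = 0 := by
      have := congrArg (fun f : U →L[ℝ] Z => f q) heq
      simpa using this
    have hsplit : ((u' q, q) : V × U) = (u' q, 0) + (0, q) := by simp
    have : E' (u' q, 0) + E' (0, q) = 0 := by
      rw [← map_add]; rw [← hsplit]; exact h0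
    have hTq : T (u' q) = - E' (0, q) := by
      rw [hT]; exact eq_neg_of_add_eq_zero_left this
    calc u' q = T.symm (T (u' q)) := (T.symm_apply_apply _).symm
      _ = - T.symm (E' (0, q)) := by rw [hTq, map_neg]
  refine ⟨J'.comp (u'.prod (ContinuousLinearMap.id ℝ U)), ?_, ?_⟩
  · have := HasFDerivAt.comp (g := J) (f := fun δ : U => (u δ, δ)) δ₀ hJ hpair
    exact this
  intro q
  have hsplit : ((u' q, q) : V × U) = (u' q, 0) + (0, q) := by simp
  simp only [ContinuousLinearMap.comp_apply, ContinuousLinearMap.prod_apply,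
    ContinuousLinearMap.id_apply]
  rw [hsplit, map_add, hu'q q, show ((-T.symm (E' (0, q)), (0:U)) : V × U)
      = -(T.symm (E' (0, q)), (0:U)) by simp, map_neg]
  ring
end

section
/- Let δ₁, ρ₂, D₂, δ₃, T ∈ ℝ with T > 0, let u = (u₁,u₂,u₃), η = (η₁,η₂,η₃), λ = (λ₁,λ₂,λ₃) : [0,1] × [0,T] → ℝ³ be continuously differentiable and let γ = (γ₁,γ₂,γ₃) : [0,1] → ℝ³ and u⁰ = (u₁⁰,u₂⁰,u₃⁰) : [0,1] → ℝ³ be continuous. Then the function f : ℝ → ℝ given by f(μ) = ⟨E(u + μη, δ₁), (λ,γ)⟩ is differentiable at 0 with f′(0) = ∫₀ᵀ∫₀¹ [ (∂η₁/∂t − η₁(1 − 2u₁) + δ₁η₁u₃ + δ₁u₁η₃)λ₁ + (∂η₂/∂t − ρ₂η₂(1 − 2u₂))λ₂ + (−D₂η₁(∂u₂/∂x) + D₂(1 − u₁)(∂η₂/∂x))(∂λ₂/∂x) + (∂η₃/∂t − δ₃(η₂ − η₃))λ₃ + (∂η₃/∂x)(∂λ₃/∂x) ] dx dt + ∫₀¹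 η₁(x,0)γ₁(x) dx + ∫₀¹ η₂(x,0)γ₂(x) dx + ∫₀¹ η₃(x,0)γ₃(x) dx. -/
private lemma gg_sliceT (u : ℝ × ℝ → ℝ) (hu : ContDiff ℝ 1 u) (x t : ℝ) :
    HasDerivAt (fun s => u (x, s)) (fderiv ℝ u (x, t) (0, 1)) t := by
  have h := (hu.differentiable one_ne_zero (x, t)).hasFDerivAt
  have hline : HasDerivAt (fun s : ℝ => ((x : ℝ), s)) ((0 : ℝ), (1 : ℝ)) t :=
    (hasDerivAt_const t x).prodMk (hasDerivAt_id t)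
  exact h.comp_hasDerivAt t hline

private lemma gg_sliceX (u : ℝ × ℝ → ℝ) (hu : ContDiff ℝ 1 u) (x t : ℝ) :
    HasDerivAt (fun y => u (y, t)) (fderiv ℝ u (x, t) (1, 0)) x := by
  have h := (hu.differentiable one_ne_zero (x, t)).hasFDerivAt
  have hline : HasDerivAt (fun y : ℝ => (y, t)) ((1 : ℝ), (0 : ℝ)) x :=
    (hasDerivAt_id x).prodMk (hasDerivAt_const x t)
  exact h.comp_hasDerivAt x hline

private lemma gg_cont_fderiv (u : ℝ × ℝ → ℝ) (hu : ContDiff ℝ 1 u) (v : ℝ × ℝ) :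
    Continuous fun p : ℝ × ℝ => fderiv ℝ u p v :=
  (hu.continuous_fderiv one_ne_zero).clm_apply continuous_const

private lemma gg_contI (f : ℝ × ℝ → ℝ) (hf : Continuous f) :
    Continuous fun t : ℝ => ∫ x in (0:ℝ)..1, f (x, t) :=
  intervalIntegral.continuous_parametric_intervalIntegral_of_continuous'
    (f := fun t x => f (x, t)) (hf.comp (continuous_snd.prodMk continuous_fst)) 0 1

private lemma gg_boundary (v w : ℝ × ℝ → ℝ) (hv : ContDiff ℝ 1 v) (hw : ContDiff ℝ 1 w)
    (v0 g : ℝ → ℝ) (hv0 : ContinuousOn v0 (Set.Icc 0 1)) (hg : ContinuousOn g (Set.Icc 0 1))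
    (μ : ℝ) :
    (∫ x in (0:ℝ)..1, (v (x, 0) + μ * w (x, 0) - v0 x) * g x)
      = (∫ x in (0:ℝ)..1, (v (x, 0) - v0 x) * g x)
        + μ * ∫ x in (0:ℝ)..1, w (x, 0) * g x := by
  have hIcc : Set.uIcc (0:ℝ) 1 = Set.Icc 0 1 := Set.uIcc_of_le (by norm_num)
  have hvx : Continuous fun x : ℝ => v (x, 0) :=
    hv.continuous.comp (continuous_id.prodMk continuous_const)
  have hwx : Continuous fun x : ℝ => w (x, 0) :=
    hw.continuous.comp (continuous_id.prodMk continuous_const)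
  have h1 : IntervalIntegrable (fun x => (v (x, 0) - v0 x) * g x) MeasureTheory.volume 0 1 := by
    apply ContinuousOn.intervalIntegrable
    rw [hIcc]
    exact ((hvx.continuousOn.sub hv0).mul hg)
  have h2 : IntervalIntegrable (fun x => w (x, 0) * g x) MeasureTheory.volume 0 1 := by
    apply ContinuousOn.intervalIntegrable
    rw [hIcc]
    exact hwx.continuousOn.mul hg
  have hpt : ∀ x : ℝ, (v (x, 0) + μ * w (x, 0) - v0 x) * g x
      = (v (x, 0) - v0 x) * g x + μ * (w (x, 0) * g x) := fun x => by ring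
  simp only [hpt]
  rw [intervalIntegral.integral_add h1 (h2.const_mul μ), intervalIntegral.integral_const_mul]

set_option maxHeartbeats 1000000 in
/-- Gâteaux derivative of the weak constraint pairing `μ ↦ ⟨E(u + μη, δ₁), (λ,γ)⟩`
of the dimensionless Gatenby–Gawlinski model at `μ = 0`. -/
theorem constraint_pairing_gateaux_derivative_in_state
    (δ₁ ρ₂ D₂ δ₃ T : ℝ) (hT : 0 < T)
    (u₁ u₂ u₃ η₁ η₂ η₃ lam₁ lam₂ lam₃ : ℝ × ℝ → ℝ)
    (hu₁ : ContDiff ℝ 1 u₁) (hu₂ : ContDiff ℝ 1 u₂) (hu₃ : ContDiff ℝ 1 u₃)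
    (hη₁ : ContDiff ℝ 1 η₁) (hη₂ : ContDiff ℝ 1 η₂) (hη₃ : ContDiff ℝ 1 η₃)
    (hlam₁ : ContDiff ℝ 1 lam₁) (hlam₂ : ContDiff ℝ 1 lam₂) (hlam₃ : ContDiff ℝ 1 lam₃)
    (γ₁ γ₂ γ₃ u₁0 u₂0 u₃0 : ℝ → ℝ)
    (hγ₁ : ContinuousOn γ₁ (Set.Icc 0 1)) (hγ₂ : ContinuousOn γ₂ (Set.Icc 0 1))
    (hγ₃ : ContinuousOn γ₃ (Set.Icc 0 1))
    (hu₁0 : ContinuousOn u₁0 (Set.Icc 0 1)) (hu₂0 : ContinuousOn u₂0 (Set.Icc 0 1))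
    (hu₃0 : ContinuousOn u₃0 (Set.Icc 0 1)) :
    HasDerivAt
      (fun μ : ℝ =>
        (∫ t in (0 : ℝ)..T, ∫ x in (0 : ℝ)..1,
          (deriv (fun s => u₁ (x, s) + μ * η₁ (x, s)) t * lam₁ (x, t)
            - (u₁ (x, t) + μ * η₁ (x, t)) * (1 - (u₁ (x, t) + μ * η₁ (x, t))) * lam₁ (x, t)
            + δ₁ * (u₁ (x, t) + μ * η₁ (x, t)) * (u₃ (x, t) + μ * η₃ (x, t)) * lam₁ (x, t)
            + deriv (fun s => u₂ (x, s) + μ * η₂ (x, s)) t * lam₂ (x, t)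
            - ρ₂ * (u₂ (x, t) + μ * η₂ (x, t)) * (1 - (u₂ (x, t) + μ * η₂ (x, t))) * lam₂ (x, t)
            + D₂ * (1 - (u₁ (x, t) + μ * η₁ (x, t)))
              * deriv (fun y => u₂ (y, t) + μ * η₂ (y, t)) x
              * deriv (fun y => lam₂ (y, t)) x
            + deriv (fun s => u₃ (x, s) + μ * η₃ (x, s)) t * lam₃ (x, t)
            + δ₃ * (u₃ (x, t) + μ * η₃ (x, t)) * lam₃ (x, t)
            - δ₃ * (u₂ (x, t) + μ * η₂ (x, t)) * lam₃ (x, t)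
            + deriv (fun y => u₃ (y, t) + μ * η₃ (y, t)) x
              * deriv (fun y => lam₃ (y, t)) x))
        + (∫ x in (0 : ℝ)..1, (u₁ (x, 0) + μ * η₁ (x, 0) - u₁0 x) * γ₁ x)
        + (∫ x in (0 : ℝ)..1, (u₂ (x, 0) + μ * η₂ (x, 0) - u₂0 x) * γ₂ x)
        + (∫ x in (0 : ℝ)..1, (u₃ (x, 0) + μ * η₃ (x, 0) - u₃0 x) * γ₃ x))
      ((∫ t in (0 : ℝ)..T, ∫ x in (0 : ℝ)..1,
          ((deriv (fun s => η₁ (x, s)) t - η₁ (x, t) * (1 - 2 * u₁ (x, t))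
              + δ₁ * η₁ (x, t) * u₃ (x, t) + δ₁ * u₁ (x, t) * η₃ (x, t)) * lam₁ (x, t)
            + (deriv (fun s => η₂ (x, s)) t - ρ₂ * η₂ (x, t) * (1 - 2 * u₂ (x, t))) * lam₂ (x, t)
            + (- D₂ * η₁ (x, t) * deriv (fun y => u₂ (y, t)) x
                + D₂ * (1 - u₁ (x, t)) * deriv (fun y => η₂ (y, t)) x)
              * deriv (fun y => lam₂ (y, t)) x
            + (deriv (fun s => η₃ (x, s)) t - δ₃ * (η₂ (x, t) - η₃ (x, t))) * lam₃ (x, t)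
            + deriv (fun y => η₃ (y, t)) x * deriv (fun y => lam₃ (y, t)) x))
        + (∫ x in (0 : ℝ)..1, η₁ (x, 0) * γ₁ x)
        + (∫ x in (0 : ℝ)..1, η₂ (x, 0) * γ₂ x)
        + (∫ x in (0 : ℝ)..1, η₃ (x, 0) * γ₃ x))
      0 := by
  -- names for the three μ-coefficient integrands
  set P0 : ℝ × ℝ → ℝ := fun p =>
    fderiv ℝ u₁ p (0, 1) * lam₁ p - u₁ p * (1 - u₁ p) * lam₁ p
      + δ₁ * u₁ p * u₃ p * lam₁ p
      + fderiv ℝ u₂ p (0, 1) * lam₂ p - ρ₂ * u₂ p * (1 - u₂ p) * lam₂ p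
      + D₂ * (1 - u₁ p) * fderiv ℝ u₂ p (1, 0) * fderiv ℝ lam₂ p (1, 0)
      + fderiv ℝ u₃ p (0, 1) * lam₃ p + δ₃ * u₃ p * lam₃ p - δ₃ * u₂ p * lam₃ p
      + fderiv ℝ u₃ p (1, 0) * fderiv ℝ lam₃ p (1, 0) with hP0def
  set P1 : ℝ × ℝ → ℝ := fun p =>
    (fderiv ℝ η₁ p (0, 1) - η₁ p * (1 - 2 * u₁ p) + δ₁ * η₁ p * u₃ p + δ₁ * u₁ p * η₃ p)
        * lam₁ p
      + (fderiv ℝ η₂ p (0, 1) - ρ₂ * η₂ p * (1 - 2 * u₂ p)) * lam₂ p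
      + (- D₂ * η₁ p * fderiv ℝ u₂ p (1, 0) + D₂ * (1 - u₁ p) * fderiv ℝ η₂ p (1, 0))
        * fderiv ℝ lam₂ p (1, 0)
      + (fderiv ℝ η₃ p (0, 1) - δ₃ * (η₂ p - η₃ p)) * lam₃ p
      + fderiv ℝ η₃ p (1, 0) * fderiv ℝ lam₃ p (1, 0) with hP1def
  set P2 : ℝ × ℝ → ℝ := fun p =>
    η₁ p * η₁ p * lam₁ p + δ₁ * η₁ p * η₃ p * lam₁ p + ρ₂ * η₂ p * η₂ p * lam₂ p
      - D₂ * η₁ p * fderiv ℝ η₂ p (1, 0) * fderiv ℝ lam₂ p (1, 0) with hP2def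
  -- continuity of P0, P1, P2
  have hC0 : Continuous P0 := by
    have c1 : Continuous fun p : ℝ × ℝ => fderiv ℝ u₁ p (0, 1) * lam₁ p :=
      (gg_cont_fderiv u₁ hu₁ (0, 1)).mul hlam₁.continuous
    have c2 : Continuous fun p : ℝ × ℝ => u₁ p * (1 - u₁ p) * lam₁ p :=
      (hu₁.continuous.mul (continuous_const.sub hu₁.continuous)).mul hlam₁.continuous
    have c3 : Continuous fun p : ℝ × ℝ => δ₁ * u₁ p * u₃ p * lam₁ p :=
      ((continuous_const.mul hu₁.continuous).mul hu₃.continuous).mul hlam₁.continuous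
    have c4 : Continuous fun p : ℝ × ℝ => fderiv ℝ u₂ p (0, 1) * lam₂ p :=
      (gg_cont_fderiv u₂ hu₂ (0, 1)).mul hlam₂.continuous
    have c5 : Continuous fun p : ℝ × ℝ => ρ₂ * u₂ p * (1 - u₂ p) * lam₂ p :=
      ((continuous_const.mul hu₂.continuous).mul (continuous_const.sub hu₂.continuous)).mul
        hlam₂.continuous
    have c6 : Continuous fun p : ℝ × ℝ =>
        D₂ * (1 - u₁ p) * fderiv ℝ u₂ p (1, 0) * fderiv ℝ lam₂ p (1, 0) :=
      ((continuous_const.mul (continuous_const.sub hu₁.continuous)).mul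
        (gg_cont_fderiv u₂ hu₂ (1, 0))).mul (gg_cont_fderiv lam₂ hlam₂ (1, 0))
    have c7 : Continuous fun p : ℝ × ℝ => fderiv ℝ u₃ p (0, 1) * lam₃ p :=
      (gg_cont_fderiv u₃ hu₃ (0, 1)).mul hlam₃.continuous
    have c8 : Continuous fun p : ℝ × ℝ => δ₃ * u₃ p * lam₃ p :=
      (continuous_const.mul hu₃.continuous).mul hlam₃.continuous
    have c9 : Continuous fun p : ℝ × ℝ => δ₃ * u₂ p * lam₃ p :=
      (continuous_const.mul hu₂.continuous).mul hlam₃.continuous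
    have c10 : Continuous fun p : ℝ × ℝ => fderiv ℝ u₃ p (1, 0) * fderiv ℝ lam₃ p (1, 0) :=
      (gg_cont_fderiv u₃ hu₃ (1, 0)).mul (gg_cont_fderiv lam₃ hlam₃ (1, 0))
    rw [hP0def]
    exact Continuous.add (Continuous.sub (Continuous.add (Continuous.add (Continuous.add
      (Continuous.sub (Continuous.add (Continuous.add (Continuous.sub c1 c2) c3) c4) c5) c6)
      c7) c8) c9) c10
  have hC1 : Continuous P1 := by
    have c1 : Continuous fun p : ℝ × ℝ =>
        (fderiv ℝ η₁ p (0, 1) - η₁ p * (1 - 2 * u₁ p) + δ₁ * η₁ p * u₃ p + δ₁ * u₁ p * η₃ p)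
          * lam₁ p :=
      ((((gg_cont_fderiv η₁ hη₁ (0, 1)).sub
        (hη₁.continuous.mul (continuous_const.sub (continuous_const.mul hu₁.continuous)))).add
          ((continuous_const.mul hη₁.continuous).mul hu₃.continuous)).add
            ((continuous_const.mul hu₁.continuous).mul hη₃.continuous)).mul hlam₁.continuous
    have c2 : Continuous fun p : ℝ × ℝ =>
        (fderiv ℝ η₂ p (0, 1) - ρ₂ * η₂ p * (1 - 2 * u₂ p)) * lam₂ p :=
      ((gg_cont_fderiv η₂ hη₂ (0, 1)).sub ((continuous_const.mul hη₂.continuous).mul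
        (continuous_const.sub (continuous_const.mul hu₂.continuous)))).mul hlam₂.continuous
    have c3 : Continuous fun p : ℝ × ℝ =>
        (- D₂ * η₁ p * fderiv ℝ u₂ p (1, 0) + D₂ * (1 - u₁ p) * fderiv ℝ η₂ p (1, 0))
          * fderiv ℝ lam₂ p (1, 0) :=
      ((((continuous_const.mul hη₁.continuous).mul (gg_cont_fderiv u₂ hu₂ (1, 0))).add
        ((continuous_const.mul (continuous_const.sub hu₁.continuous)).mul
          (gg_cont_fderiv η₂ hη₂ (1, 0)))).mul (gg_cont_fderiv lam₂ hlam₂ (1, 0)))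
    have c4 : Continuous fun p : ℝ × ℝ =>
        (fderiv ℝ η₃ p (0, 1) - δ₃ * (η₂ p - η₃ p)) * lam₃ p :=
      ((gg_cont_fderiv η₃ hη₃ (0, 1)).sub
        (continuous_const.mul (hη₂.continuous.sub hη₃.continuous))).mul hlam₃.continuous
    have c5 : Continuous fun p : ℝ × ℝ => fderiv ℝ η₃ p (1, 0) * fderiv ℝ lam₃ p (1, 0) :=
      (gg_cont_fderiv η₃ hη₃ (1, 0)).mul (gg_cont_fderiv lam₃ hlam₃ (1, 0))
    rw [hP1def]
    exact Continuous.add (Continuous.add (Continuous.add (Continuous.add c1 c2) c3) c4) c5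
  have hC2 : Continuous P2 := by
    have c1 : Continuous fun p : ℝ × ℝ => η₁ p * η₁ p * lam₁ p :=
      (hη₁.continuous.mul hη₁.continuous).mul hlam₁.continuous
    have c2 : Continuous fun p : ℝ × ℝ => δ₁ * η₁ p * η₃ p * lam₁ p :=
      ((continuous_const.mul hη₁.continuous).mul hη₃.continuous).mul hlam₁.continuous
    have c3 : Continuous fun p : ℝ × ℝ => ρ₂ * η₂ p * η₂ p * lam₂ p :=
      ((continuous_const.mul hη₂.continuous).mul hη₂.continuous).mul hlam₂.continuous
    have c4 : Continuous fun p : ℝ × ℝ =>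
        D₂ * η₁ p * fderiv ℝ η₂ p (1, 0) * fderiv ℝ lam₂ p (1, 0) :=
      ((continuous_const.mul hη₁.continuous).mul (gg_cont_fderiv η₂ hη₂ (1, 0))).mul
        (gg_cont_fderiv lam₂ hlam₂ (1, 0))
    rw [hP2def]
    exact Continuous.sub (Continuous.add (Continuous.add c1 c2) c3) c4
  -- inner integrability
  have hi0 : ∀ t : ℝ, IntervalIntegrable (fun x => P0 (x, t)) MeasureTheory.volume 0 1 :=
    fun t => (hC0.comp (continuous_id.prodMk continuous_const)).intervalIntegrable 0 1
  have hi1 : ∀ t : ℝ, IntervalIntegrable (fun x => P1 (x, t)) MeasureTheory.volume 0 1 :=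
    fun t => (hC1.comp (continuous_id.prodMk continuous_const)).intervalIntegrable 0 1
  have hi2 : ∀ t : ℝ, IntervalIntegrable (fun x => P2 (x, t)) MeasureTheory.volume 0 1 :=
    fun t => (hC2.comp (continuous_id.prodMk continuous_const)).intervalIntegrable 0 1
  -- inner integral functions
  set I0 : ℝ → ℝ := fun t => ∫ x in (0:ℝ)..1, P0 (x, t) with hI0def
  set I1 : ℝ → ℝ := fun t => ∫ x in (0:ℝ)..1, P1 (x, t) with hI1def
  set I2 : ℝ → ℝ := fun t => ∫ x in (0:ℝ)..1, P2 (x, t) with hI2def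
  have hJ0 : IntervalIntegrable I0 MeasureTheory.volume 0 T := by
    rw [hI0def]; exact (gg_contI P0 hC0).intervalIntegrable 0 T
  have hJ1 : IntervalIntegrable I1 MeasureTheory.volume 0 T := by
    rw [hI1def]; exact (gg_contI P1 hC1).intervalIntegrable 0 T
  have hJ2 : IntervalIntegrable I2 MeasureTheory.volume 0 T := by
    rw [hI2def]; exact (gg_contI P2 hC2).intervalIntegrable 0 T
  -- pointwise decomposition of the big integrand
  have hpt : ∀ (μ x t : ℝ),
      (deriv (fun s => u₁ (x, s) + μ * η₁ (x, s)) t * lam₁ (x, t)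
        - (u₁ (x, t) + μ * η₁ (x, t)) * (1 - (u₁ (x, t) + μ * η₁ (x, t))) * lam₁ (x, t)
        + δ₁ * (u₁ (x, t) + μ * η₁ (x, t)) * (u₃ (x, t) + μ * η₃ (x, t)) * lam₁ (x, t)
        + deriv (fun s => u₂ (x, s) + μ * η₂ (x, s)) t * lam₂ (x, t)
        - ρ₂ * (u₂ (x, t) + μ * η₂ (x, t)) * (1 - (u₂ (x, t) + μ * η₂ (x, t))) * lam₂ (x, t)
        + D₂ * (1 - (u₁ (x, t) + μ * η₁ (x, t)))
          * deriv (fun y => u₂ (y, t) + μ * η₂ (y, t)) x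
          * deriv (fun y => lam₂ (y, t)) x
        + deriv (fun s => u₃ (x, s) + μ * η₃ (x, s)) t * lam₃ (x, t)
        + δ₃ * (u₃ (x, t) + μ * η₃ (x, t)) * lam₃ (x, t)
        - δ₃ * (u₂ (x, t) + μ * η₂ (x, t)) * lam₃ (x, t)
        + deriv (fun y => u₃ (y, t) + μ * η₃ (y, t)) x
          * deriv (fun y => lam₃ (y, t)) x)
      = P0 (x, t) + (μ * P1 (x, t) + μ ^ 2 * P2 (x, t)) := by
    intro μ x t
    have e1 : deriv (fun s => u₁ (x, s) + μ * η₁ (x, s)) t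
        = fderiv ℝ u₁ (x, t) (0, 1) + μ * fderiv ℝ η₁ (x, t) (0, 1) :=
      ((gg_sliceT u₁ hu₁ x t).add ((gg_sliceT η₁ hη₁ x t).const_mul μ)).deriv
    have e2 : deriv (fun s => u₂ (x, s) + μ * η₂ (x, s)) t
        = fderiv ℝ u₂ (x, t) (0, 1) + μ * fderiv ℝ η₂ (x, t) (0, 1) :=
      ((gg_sliceT u₂ hu₂ x t).add ((gg_sliceT η₂ hη₂ x t).const_mul μ)).deriv
    have e3 : deriv (fun s => u₃ (x, s) + μ * η₃ (x, s)) t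
        = fderiv ℝ u₃ (x, t) (0, 1) + μ * fderiv ℝ η₃ (x, t) (0, 1) :=
      ((gg_sliceT u₃ hu₃ x t).add ((gg_sliceT η₃ hη₃ x t).const_mul μ)).deriv
    have e4 : deriv (fun y => u₂ (y, t) + μ * η₂ (y, t)) x
        = fderiv ℝ u₂ (x, t) (1, 0) + μ * fderiv ℝ η₂ (x, t) (1, 0) :=
      ((gg_sliceX u₂ hu₂ x t).add ((gg_sliceX η₂ hη₂ x t).const_mul μ)).deriv
    have e5 : deriv (fun y => u₃ (y, t) + μ * η₃ (y, t)) x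
        = fderiv ℝ u₃ (x, t) (1, 0) + μ * fderiv ℝ η₃ (x, t) (1, 0) :=
      ((gg_sliceX u₃ hu₃ x t).add ((gg_sliceX η₃ hη₃ x t).const_mul μ)).deriv
    have e6 : deriv (fun y => lam₂ (y, t)) x = fderiv ℝ lam₂ (x, t) (1, 0) :=
      (gg_sliceX lam₂ hlam₂ x t).deriv
    have e7 : deriv (fun y => lam₃ (y, t)) x = fderiv ℝ lam₃ (x, t) (1, 0) :=
      (gg_sliceX lam₃ hlam₃ x t).deriv
    rw [e1, e2, e3, e4, e5, e6, e7]
    simp only [hP0def, hP1def, hP2def]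
    ring
  -- the whole pairing is a quadratic polynomial in μ
  have key : ∀ μ : ℝ,
      ((∫ t in (0 : ℝ)..T, ∫ x in (0 : ℝ)..1,
          (deriv (fun s => u₁ (x, s) + μ * η₁ (x, s)) t * lam₁ (x, t)
            - (u₁ (x, t) + μ * η₁ (x, t)) * (1 - (u₁ (x, t) + μ * η₁ (x, t))) * lam₁ (x, t)
            + δ₁ * (u₁ (x, t) + μ * η₁ (x, t)) * (u₃ (x, t) + μ * η₃ (x, t)) * lam₁ (x, t)
            + deriv (fun s => u₂ (x, s) + μ * η₂ (x, s)) t * lam₂ (x, t)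
            - ρ₂ * (u₂ (x, t) + μ * η₂ (x, t)) * (1 - (u₂ (x, t) + μ * η₂ (x, t))) * lam₂ (x, t)
            + D₂ * (1 - (u₁ (x, t) + μ * η₁ (x, t)))
              * deriv (fun y => u₂ (y, t) + μ * η₂ (y, t)) x
              * deriv (fun y => lam₂ (y, t)) x
            + deriv (fun s => u₃ (x, s) + μ * η₃ (x, s)) t * lam₃ (x, t)
            + δ₃ * (u₃ (x, t) + μ * η₃ (x, t)) * lam₃ (x, t)
            - δ₃ * (u₂ (x, t) + μ * η₂ (x, t)) * lam₃ (x, t)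
            + deriv (fun y => u₃ (y, t) + μ * η₃ (y, t)) x
              * deriv (fun y => lam₃ (y, t)) x))
        + (∫ x in (0 : ℝ)..1, (u₁ (x, 0) + μ * η₁ (x, 0) - u₁0 x) * γ₁ x)
        + (∫ x in (0 : ℝ)..1, (u₂ (x, 0) + μ * η₂ (x, 0) - u₂0 x) * γ₂ x)
        + (∫ x in (0 : ℝ)..1, (u₃ (x, 0) + μ * η₃ (x, 0) - u₃0 x) * γ₃ x))
      = ((∫ t in (0 : ℝ)..T, I0 t)
          + (μ * (∫ t in (0 : ℝ)..T, I1 t) + μ ^ 2 * (∫ t in (0 : ℝ)..T, I2 t)))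
        + ((∫ x in (0 : ℝ)..1, (u₁ (x, 0) - u₁0 x) * γ₁ x)
            + μ * (∫ x in (0 : ℝ)..1, η₁ (x, 0) * γ₁ x))
        + ((∫ x in (0 : ℝ)..1, (u₂ (x, 0) - u₂0 x) * γ₂ x)
            + μ * (∫ x in (0 : ℝ)..1, η₂ (x, 0) * γ₂ x))
        + ((∫ x in (0 : ℝ)..1, (u₃ (x, 0) - u₃0 x) * γ₃ x)
            + μ * (∫ x in (0 : ℝ)..1, η₃ (x, 0) * γ₃ x)) := by
    intro μ
    have hsplit : ∀ t : ℝ,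
        (∫ x in (0:ℝ)..1, (P0 (x, t) + (μ * P1 (x, t) + μ ^ 2 * P2 (x, t))))
          = I0 t + (μ * I1 t + μ ^ 2 * I2 t) := by
      intro t
      rw [intervalIntegral.integral_add (hi0 t)
            (((hi1 t).const_mul μ).add ((hi2 t).const_mul (μ ^ 2))),
          intervalIntegral.integral_add ((hi1 t).const_mul μ) ((hi2 t).const_mul (μ ^ 2)),
          intervalIntegral.integral_const_mul, intervalIntegral.integral_const_mul]
    have houter : IntervalIntegrable (fun t => μ * I1 t + μ ^ 2 * I2 t)
        MeasureTheory.volume 0 T := (hJ1.const_mul μ).add (hJ2.const_mul (μ ^ 2))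
    rw [gg_boundary u₁ η₁ hu₁ hη₁ u₁0 γ₁ hu₁0 hγ₁ μ,
        gg_boundary u₂ η₂ hu₂ hη₂ u₂0 γ₂ hu₂0 hγ₂ μ,
        gg_boundary u₃ η₃ hu₃ hη₃ u₃0 γ₃ hu₃0 hγ₃ μ]
    simp only [hpt, hsplit]
    rw [intervalIntegral.integral_add hJ0 houter,
        intervalIntegral.integral_add (hJ1.const_mul μ) (hJ2.const_mul (μ ^ 2)),
        intervalIntegral.integral_const_mul, intervalIntegral.integral_const_mul]
  -- the target double integral equals ∫ I1
  have hD : (∫ t in (0 : ℝ)..T, ∫ x in (0 : ℝ)..1,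
        ((deriv (fun s => η₁ (x, s)) t - η₁ (x, t) * (1 - 2 * u₁ (x, t))
            + δ₁ * η₁ (x, t) * u₃ (x, t) + δ₁ * u₁ (x, t) * η₃ (x, t)) * lam₁ (x, t)
          + (deriv (fun s => η₂ (x, s)) t - ρ₂ * η₂ (x, t) * (1 - 2 * u₂ (x, t))) * lam₂ (x, t)
          + (- D₂ * η₁ (x, t) * deriv (fun y => u₂ (y, t)) x
              + D₂ * (1 - u₁ (x, t)) * deriv (fun y => η₂ (y, t)) x)
            * deriv (fun y => lam₂ (y, t)) x
          + (deriv (fun s => η₃ (x, s)) t - δ₃ * (η₂ (x, t) - η₃ (x, t))) * lam₃ (x, t)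
          + deriv (fun y => η₃ (y, t)) x * deriv (fun y => lam₃ (y, t)) x))
      = ∫ t in (0 : ℝ)..T, I1 t := by
    apply intervalIntegral.integral_congr
    intro t _
    simp only [hI1def]
    apply intervalIntegral.integral_congr
    intro x _
    beta_reduce
    rw [(gg_sliceT η₁ hη₁ x t).deriv, (gg_sliceT η₂ hη₂ x t).deriv, (gg_sliceT η₃ hη₃ x t).deriv,
        (gg_sliceX u₂ hu₂ x t).deriv, (gg_sliceX η₂ hη₂ x t).deriv, (gg_sliceX η₃ hη₃ x t).deriv,
        (gg_sliceX lam₂ hlam₂ x t).deriv, (gg_sliceX lam₃ hlam₃ x t).deriv]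
  rw [hD]
  have hpoly : HasDerivAt (fun μ : ℝ =>
      ((∫ t in (0 : ℝ)..T, I0 t)
          + (μ * (∫ t in (0 : ℝ)..T, I1 t) + μ ^ 2 * (∫ t in (0 : ℝ)..T, I2 t)))
        + ((∫ x in (0 : ℝ)..1, (u₁ (x, 0) - u₁0 x) * γ₁ x)
            + μ * (∫ x in (0 : ℝ)..1, η₁ (x, 0) * γ₁ x))
        + ((∫ x in (0 : ℝ)..1, (u₂ (x, 0) - u₂0 x) * γ₂ x)
            + μ * (∫ x in (0 : ℝ)..1, η₂ (x, 0) * γ₂ x))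
        + ((∫ x in (0 : ℝ)..1, (u₃ (x, 0) - u₃0 x) * γ₃ x)
            + μ * (∫ x in (0 : ℝ)..1, η₃ (x, 0) * γ₃ x)))
      ((∫ t in (0 : ℝ)..T, I1 t)
        + (∫ x in (0 : ℝ)..1, η₁ (x, 0) * γ₁ x)
        + (∫ x in (0 : ℝ)..1, η₂ (x, 0) * γ₂ x)
        + (∫ x in (0 : ℝ)..1, η₃ (x, 0) * γ₃ x)) 0 := by
    have h :=
      ((((hasDerivAt_const (0:ℝ) (∫ t in (0 : ℝ)..T, I0 t)).add
            (((hasDerivAt_id (0:ℝ)).mul_const (∫ t in (0 : ℝ)..T, I1 t)).add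
              ((hasDerivAt_pow 2 (0:ℝ)).mul_const (∫ t in (0 : ℝ)..T, I2 t)))).add
          ((hasDerivAt_const (0:ℝ) (∫ x in (0 : ℝ)..1, (u₁ (x, 0) - u₁0 x) * γ₁ x)).add
            ((hasDerivAt_id (0:ℝ)).mul_const (∫ x in (0 : ℝ)..1, η₁ (x, 0) * γ₁ x)))).add
          ((hasDerivAt_const (0:ℝ) (∫ x in (0 : ℝ)..1, (u₂ (x, 0) - u₂0 x) * γ₂ x)).add
            ((hasDerivAt_id (0:ℝ)).mul_const (∫ x in (0 : ℝ)..1, η₂ (x, 0) * γ₂ x)))).add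
          ((hasDerivAt_const (0:ℝ) (∫ x in (0 : ℝ)..1, (u₃ (x, 0) - u₃0 x) * γ₃ x)).add
            ((hasDerivAt_id (0:ℝ)).mul_const (∫ x in (0 : ℝ)..1, η₃ (x, 0) * γ₃ x)))
    refine HasDerivAt.congr_deriv (h.congr_of_eventuallyEq (Filter.Eventually.of_forall fun μ => ?_)) ?_
    · simp only [Pi.add_apply, id]
    · norm_num
  exact hpoly.congr_of_eventuallyEq (Filter.Eventually.of_forall key)
end

section
/- Let δ₁, ρ₂, D₂, δ₃, T ∈ ℝ with T > 0, let u = (u₁,u₂,u₃), η = (η₁,η₂,η₃), λ = (λ₁,λ₂,λ₃) : [0,1] × [0,T] → ℝ³ be continuously differentiable and let û₃ : [0,1] × [0,T] → ℝ be continuous. Assume: (i) ηᵢ(x,0) = 0 for all x and ηᵢ(1,t) = 0 for all t (i = 1,2,3); (ii) λᵢ(x,T) = 0 for all x and λᵢ(1,t) = 0 for all t (i = 1,2,3); (iii) (linearized state equation, weak form) for every continuously differentiable μ = (μ₁,μ₂,μ₃) : [0,1]×[0,T] → ℝ³ with μᵢ(1,t) = 0 for all t, ∫₀ᵀ∫₀¹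 [ (∂η₁/∂t − η₁(1−2u₁) + δ₁η₁u₃ + δ₁u₁η₃)μ₁ + (∂η₂/∂t − ρ₂η₂(1−2u₂))μ₂ + (−D₂η₁(∂u₂/∂x) + D₂(1−u₁)(∂η₂/∂x))(∂μ₂/∂x) + (∂η₃/∂t − δ₃(η₂−η₃))μ₃ + (∂η₃/∂x)(∂μ₃/∂x) ] dx dt = −∫₀ᵀ∫₀¹ u₁u₃μ₁ dx dt; (iv) (adjoint equation, weak form) for every continuously differentiable ν = (ν₁,ν₂,ν₃) : [0,1]×[0,T] → ℝ³ with νᵢ(1,t) = 0 for all t, 0 = ∫₀ᵀ∫₀¹ [ −(∂λ₁/∂t)ν₁ − ν₁(1−2u₁)λ₁ + δ₁ν₁u₃λ₁ − D₂ν₁(∂u₂/∂x)(∂λ₂/∂x) − (∂λ₂/∂t)ν₂ − ρ₂ν₂(1−2u₂)λ₂ + D₂(1−u₁)(∂λ₂/∂x)(∂ν₂/∂x) − δ₃ν₂λ₃ − (∂λ₃/∂t)ν₃ + δ₃ν₃λ₃ + (∂λ₃/∂x)(∂ν₃/∂x) + δ₁u₁ν₃λ₁ + ν₃(u₃ − û₃)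 ] dx dt. Then ∫₀ᵀ∫₀¹ η₃(u₃ − û₃) dx dt = ∫₀ᵀ∫₀¹ u₁u₃λ₁ dx dt. -/
open MeasureTheory Set intervalIntegral

lemma hasDerivAtT {f : ℝ × ℝ → ℝ} (hf : ContDiff ℝ 1 f) (x t : ℝ) :
    HasDerivAt (fun s => f (x, s)) (fderiv ℝ f (x, t) (0, 1)) t := by
  have h1 : HasDerivAt (fun s : ℝ => ((x, s) : ℝ × ℝ)) (0, 1) t :=
    (hasDerivAt_const t x).prodMk (hasDerivAt_id t)
  exact ((hf.differentiable one_ne_zero (x, t)).hasFDerivAt.comp_hasDerivAt t h1)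

lemma hasDerivAtX {f : ℝ × ℝ → ℝ} (hf : ContDiff ℝ 1 f) (x t : ℝ) :
    HasDerivAt (fun y => f (y, t)) (fderiv ℝ f (x, t) (1, 0)) x := by
  have h1 : HasDerivAt (fun y : ℝ => ((y, t) : ℝ × ℝ)) (1, 0) x :=
    (hasDerivAt_id x).prodMk (hasDerivAt_const x t)
  exact ((hf.differentiable one_ne_zero (x, t)).hasFDerivAt.comp_hasDerivAt x h1)

lemma hasDerivAtT' {f : ℝ × ℝ → ℝ} (hf : ContDiff ℝ 1 f) (x t : ℝ) :
    HasDerivAt (fun s => f (x, s)) (deriv (fun s => f (x, s)) t) t := by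
  have h := hasDerivAtT hf x t
  exact h.deriv ▸ h

lemma contDT {f : ℝ × ℝ → ℝ} (hf : ContDiff ℝ 1 f) :
    Continuous fun q : ℝ × ℝ => deriv (fun s => f (q.1, s)) q.2 := by
  have : (fun q : ℝ × ℝ => deriv (fun s => f (q.1, s)) q.2)
      = fun q => fderiv ℝ f q ((0 : ℝ), (1 : ℝ)) := by
    funext q
    rw [(hasDerivAtT hf q.1 q.2).deriv]
  rw [this]
  exact (hf.continuous_fderiv one_ne_zero).clm_apply continuous_const

lemma contDX {f : ℝ × ℝ → ℝ} (hf : ContDiff ℝ 1 f) :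
    Continuous fun q : ℝ × ℝ => deriv (fun y => f (y, q.2)) q.1 := by
  have : (fun q : ℝ × ℝ => deriv (fun y => f (y, q.2)) q.1)
      = fun q => fderiv ℝ f q ((1 : ℝ), (0 : ℝ)) := by
    funext q
    rw [(hasDerivAtX hf q.1 q.2).deriv]
  rw [this]
  exact (hf.continuous_fderiv one_ne_zero).clm_apply continuous_const

lemma keyInt {T : ℝ} (f : ℝ × ℝ → ℝ)
    (hf : ContinuousOn f (Set.Icc 0 1 ×ˢ Set.Icc 0 T)) :
    Integrable (fun p : ℝ × ℝ => f (p.2, p.1))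
      ((volume.restrict (Ioc (0:ℝ) T)).prod (volume.restrict (Ioc (0:ℝ) 1))) := by
  rw [Measure.prod_restrict]
  have hsw : Continuous fun p : ℝ × ℝ => (p.2, p.1) := continuous_swap
  have hc : ContinuousOn (fun p : ℝ × ℝ => f (p.2, p.1)) (Icc 0 T ×ˢ Icc 0 1) :=
    hf.comp hsw.continuousOn (fun p hp => ⟨hp.2, hp.1⟩)
  have h2 := hc.integrableOn_compact (μ := volume) (isCompact_Icc.prod isCompact_Icc)
  exact h2.mono_set (Set.prod_mono Ioc_subset_Icc_self Ioc_subset_Icc_self)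

lemma convI {T : ℝ} (hT : 0 ≤ T) (f : ℝ × ℝ → ℝ)
    (hf : Integrable (fun p : ℝ × ℝ => f (p.2, p.1))
      ((volume.restrict (Ioc (0:ℝ) T)).prod (volume.restrict (Ioc (0:ℝ) 1)))) :
    (∫ t in (0:ℝ)..T, ∫ x in (0:ℝ)..1, f (x, t))
      = ∫ p, f (p.2, p.1)
          ∂((volume.restrict (Ioc (0:ℝ) T)).prod (volume.restrict (Ioc (0:ℝ) 1))) := by
  rw [intervalIntegral.integral_of_le hT, MeasureTheory.integral_prod _ hf]
  refine setIntegral_congr_fun measurableSet_Ioc (fun t _ => ?_)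
  rw [intervalIntegral.integral_of_le (zero_le_one' ℝ)]

/-- Adjoint-method gradient formula for the Gatenby–Gawlinski tumor invasion
model: if `η` solves the weak linearized state equation (with right-hand side
given by the `δ₁`-derivative of the constraint and zero initial data) and `λ`
solves the weak adjoint problem with source `u₃ − û₃` and `λ(·,T) = 0`, then
`∫₀ᵀ∫₀¹ η₃(u₃ − û₃) dx dt = ∫₀ᵀ∫₀¹ u₁u₃λ₁ dx dt`. -/
theorem adjoint_gradient_formula
    (δ₁ ρ₂ D₂ δ₃ T : ℝ) (hT : 0 < T)
    (u₁ u₂ u₃ η₁ η₂ η₃ lam₁ lam₂ lam₃ : ℝ × ℝ → ℝ)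
    (hu₁ : ContDiff ℝ 1 u₁) (hu₂ : ContDiff ℝ 1 u₂) (hu₃ : ContDiff ℝ 1 u₃)
    (hη₁ : ContDiff ℝ 1 η₁) (hη₂ : ContDiff ℝ 1 η₂) (hη₃ : ContDiff ℝ 1 η₃)
    (hlam₁ : ContDiff ℝ 1 lam₁) (hlam₂ : ContDiff ℝ 1 lam₂) (hlam₃ : ContDiff ℝ 1 lam₃)
    (u₃hat : ℝ × ℝ → ℝ)
    (hu₃hat : ContinuousOn u₃hat (Set.Icc 0 1 ×ˢ Set.Icc 0 T))
    -- (i) zero initial data and boundary condition at x = 1 for η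
    (hη0 : ∀ x ∈ Set.Icc (0 : ℝ) 1, η₁ (x, 0) = 0 ∧ η₂ (x, 0) = 0 ∧ η₃ (x, 0) = 0)
    (hη1 : ∀ t ∈ Set.Icc (0 : ℝ) T, η₁ (1, t) = 0 ∧ η₂ (1, t) = 0 ∧ η₃ (1, t) = 0)
    -- (ii) final-time condition and boundary condition at x = 1 for λ
    (hlamT : ∀ x ∈ Set.Icc (0 : ℝ) 1, lam₁ (x, T) = 0 ∧ lam₂ (x, T) = 0 ∧ lam₃ (x, T) = 0)
    (hlam1 : ∀ t ∈ Set.Icc (0 : ℝ) T, lam₁ (1, t) = 0 ∧ lam₂ (1, t) = 0 ∧ lam₃ (1, t) = 0)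
    -- (iii) linearized state equation in weak form
    (hlin : ∀ μ₁ μ₂ μ₃ : ℝ × ℝ → ℝ,
      ContDiff ℝ 1 μ₁ → ContDiff ℝ 1 μ₂ → ContDiff ℝ 1 μ₃ →
      (∀ t ∈ Set.Icc (0 : ℝ) T, μ₁ (1, t) = 0 ∧ μ₂ (1, t) = 0 ∧ μ₃ (1, t) = 0) →
      ∫ t in (0 : ℝ)..T, ∫ x in (0 : ℝ)..1,
        ((deriv (fun s => η₁ (x, s)) t - η₁ (x, t) * (1 - 2 * u₁ (x, t))
            + δ₁ * η₁ (x, t) * u₃ (x, t) + δ₁ * u₁ (x, t) * η₃ (x, t)) * μ₁ (x, t)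
          + (deriv (fun s => η₂ (x, s)) t - ρ₂ * η₂ (x, t) * (1 - 2 * u₂ (x, t))) * μ₂ (x, t)
          + (- D₂ * η₁ (x, t) * deriv (fun y => u₂ (y, t)) x
              + D₂ * (1 - u₁ (x, t)) * deriv (fun y => η₂ (y, t)) x)
            * deriv (fun y => μ₂ (y, t)) x
          + (deriv (fun s => η₃ (x, s)) t - δ₃ * (η₂ (x, t) - η₃ (x, t))) * μ₃ (x, t)
          + deriv (fun y => η₃ (y, t)) x * deriv (fun y => μ₃ (y, t)) x)
      = - ∫ t in (0 : ℝ)..T, ∫ x in (0 : ℝ)..1, u₁ (x, t) * u₃ (x, t) * μ₁ (x, t))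
    -- (iv) adjoint equation in weak form
    (hadj : ∀ ν₁ ν₂ ν₃ : ℝ × ℝ → ℝ,
      ContDiff ℝ 1 ν₁ → ContDiff ℝ 1 ν₂ → ContDiff ℝ 1 ν₃ →
      (∀ t ∈ Set.Icc (0 : ℝ) T, ν₁ (1, t) = 0 ∧ ν₂ (1, t) = 0 ∧ ν₃ (1, t) = 0) →
      0 = ∫ t in (0 : ℝ)..T, ∫ x in (0 : ℝ)..1,
        (- deriv (fun s => lam₁ (x, s)) t * ν₁ (x, t)
          - ν₁ (x, t) * (1 - 2 * u₁ (x, t)) * lam₁ (x, t)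
          + δ₁ * ν₁ (x, t) * u₃ (x, t) * lam₁ (x, t)
          - D₂ * ν₁ (x, t) * deriv (fun y => u₂ (y, t)) x * deriv (fun y => lam₂ (y, t)) x
          - deriv (fun s => lam₂ (x, s)) t * ν₂ (x, t)
          - ρ₂ * ν₂ (x, t) * (1 - 2 * u₂ (x, t)) * lam₂ (x, t)
          + D₂ * (1 - u₁ (x, t)) * deriv (fun y => lam₂ (y, t)) x
            * deriv (fun y => ν₂ (y, t)) x
          - δ₃ * ν₂ (x, t) * lam₃ (x, t)
          - deriv (fun s => lam₃ (x, s)) t * ν₃ (x, t)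
          + δ₃ * ν₃ (x, t) * lam₃ (x, t)
          + deriv (fun y => lam₃ (y, t)) x * deriv (fun y => ν₃ (y, t)) x
          + δ₁ * u₁ (x, t) * ν₃ (x, t) * lam₁ (x, t)
          + ν₃ (x, t) * (u₃ (x, t) - u₃hat (x, t)))) :
    ∫ t in (0 : ℝ)..T, ∫ x in (0 : ℝ)..1, η₃ (x, t) * (u₃ (x, t) - u₃hat (x, t))
      = ∫ t in (0 : ℝ)..T, ∫ x in (0 : ℝ)..1, u₁ (x, t) * u₃ (x, t) * lam₁ (x, t) := by
  have c0T : (0:ℝ) ≤ T := hT.le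
  set μT : Measure ℝ := volume.restrict (Ioc (0:ℝ) T) with hμT
  set μX : Measure ℝ := volume.restrict (Ioc (0:ℝ) 1) with hμX
  set PM : Measure (ℝ × ℝ) := μT.prod μX with hPM
  set FA : ℝ × ℝ → ℝ := fun q => ((deriv (fun s => η₁ (q.1, s)) q.2 - η₁ (q.1, q.2) * (1 - 2 * u₁ (q.1, q.2))
            + δ₁ * η₁ (q.1, q.2) * u₃ (q.1, q.2) + δ₁ * u₁ (q.1, q.2) * η₃ (q.1, q.2)) * lam₁ (q.1, q.2)
          + (deriv (fun s => η₂ (q.1, s)) q.2 - ρ₂ * η₂ (q.1, q.2) * (1 - 2 * u₂ (q.1, q.2))) * lam₂ (q.1, q.2)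
          + (- D₂ * η₁ (q.1, q.2) * deriv (fun y => u₂ (y, q.2)) q.1
              + D₂ * (1 - u₁ (q.1, q.2)) * deriv (fun y => η₂ (y, q.2)) q.1)
            * deriv (fun y => lam₂ (y, q.2)) q.1
          + (deriv (fun s => η₃ (q.1, s)) q.2 - δ₃ * (η₂ (q.1, q.2) - η₃ (q.1, q.2))) * lam₃ (q.1, q.2)
          + deriv (fun y => η₃ (y, q.2)) q.1 * deriv (fun y => lam₃ (y, q.2)) q.1) with hFAdef
  set FB : ℝ × ℝ → ℝ := fun q => (- deriv (fun s => lam₁ (q.1, s)) q.2 * η₁ (q.1, q.2)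
          - η₁ (q.1, q.2) * (1 - 2 * u₁ (q.1, q.2)) * lam₁ (q.1, q.2)
          + δ₁ * η₁ (q.1, q.2) * u₃ (q.1, q.2) * lam₁ (q.1, q.2)
          - D₂ * η₁ (q.1, q.2) * deriv (fun y => u₂ (y, q.2)) q.1 * deriv (fun y => lam₂ (y, q.2)) q.1
          - deriv (fun s => lam₂ (q.1, s)) q.2 * η₂ (q.1, q.2)
          - ρ₂ * η₂ (q.1, q.2) * (1 - 2 * u₂ (q.1, q.2)) * lam₂ (q.1, q.2)
          + D₂ * (1 - u₁ (q.1, q.2)) * deriv (fun y => lam₂ (y, q.2)) q.1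
            * deriv (fun y => η₂ (y, q.2)) q.1
          - δ₃ * η₂ (q.1, q.2) * lam₃ (q.1, q.2)
          - deriv (fun s => lam₃ (q.1, s)) q.2 * η₃ (q.1, q.2)
          + δ₃ * η₃ (q.1, q.2) * lam₃ (q.1, q.2)
          + deriv (fun y => lam₃ (y, q.2)) q.1 * deriv (fun y => η₃ (y, q.2)) q.1
          + δ₁ * u₁ (q.1, q.2) * η₃ (q.1, q.2) * lam₁ (q.1, q.2)
          + η₃ (q.1, q.2) * (u₃ (q.1, q.2) - u₃hat (q.1, q.2))) with hFBdef
  set FG : ℝ × ℝ → ℝ := fun q => ((deriv (fun s => η₁ (q.1, s)) q.2 * lam₁ (q.1, q.2) + η₁ (q.1, q.2) * deriv (fun s => lam₁ (q.1, s)) q.2)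
          + (deriv (fun s => η₂ (q.1, s)) q.2 * lam₂ (q.1, q.2) + η₂ (q.1, q.2) * deriv (fun s => lam₂ (q.1, s)) q.2)
          + (deriv (fun s => η₃ (q.1, s)) q.2 * lam₃ (q.1, q.2) + η₃ (q.1, q.2) * deriv (fun s => lam₃ (q.1, s)) q.2)) with hFGdef
  set FE : ℝ × ℝ → ℝ := fun q => (η₃ (q.1, q.2) * (u₃ (q.1, q.2) - u₃hat (q.1, q.2))) with hFEdef
  set FR : ℝ × ℝ → ℝ := fun q => (u₁ (q.1, q.2) * u₃ (q.1, q.2) * lam₁ (q.1, q.2)) with hFRdef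
  -- continuity atoms
  have d1 : Continuous fun q : ℝ × ℝ => deriv (fun s => η₁ (q.1, s)) q.2 := contDT hη₁
  have d2 : Continuous fun q : ℝ × ℝ => deriv (fun s => η₂ (q.1, s)) q.2 := contDT hη₂
  have d3 : Continuous fun q : ℝ × ℝ => deriv (fun s => η₃ (q.1, s)) q.2 := contDT hη₃
  have d4 : Continuous fun q : ℝ × ℝ => deriv (fun s => lam₁ (q.1, s)) q.2 := contDT hlam₁
  have d5 : Continuous fun q : ℝ × ℝ => deriv (fun s => lam₂ (q.1, s)) q.2 := contDT hlam₂
  have d6 : Continuous fun q : ℝ × ℝ => deriv (fun s => lam₃ (q.1, s)) q.2 := contDT hlam₃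
  have d7 : Continuous fun q : ℝ × ℝ => deriv (fun y => u₂ (y, q.2)) q.1 := contDX hu₂
  have d8 : Continuous fun q : ℝ × ℝ => deriv (fun y => η₂ (y, q.2)) q.1 := contDX hη₂
  have d9 : Continuous fun q : ℝ × ℝ => deriv (fun y => lam₂ (y, q.2)) q.1 := contDX hlam₂
  have d10 : Continuous fun q : ℝ × ℝ => deriv (fun y => η₃ (y, q.2)) q.1 := contDX hη₃
  have d11 : Continuous fun q : ℝ × ℝ => deriv (fun y => lam₃ (y, q.2)) q.1 := contDX hlam₃
  have cu₁ := hu₁.continuous; have cu₂ := hu₂.continuous; have cu₃ := hu₃.continuous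
  have ce₁ := hη₁.continuous; have ce₂ := hη₂.continuous; have ce₃ := hη₃.continuous
  have cl₁ := hlam₁.continuous; have cl₂ := hlam₂.continuous; have cl₃ := hlam₃.continuous
  have cA : Continuous FA := by
    rw [hFAdef]; simp only [Prod.mk.eta]; fun_prop
  have cG : Continuous FG := by
    rw [hFGdef]; simp only [Prod.mk.eta]; fun_prop
  have cR : Continuous FR := by
    rw [hFRdef]; simp only [Prod.mk.eta]; fun_prop
  have cE : ContinuousOn FE (Icc 0 1 ×ˢ Icc 0 T) := by
    rw [hFEdef]; simp only [Prod.mk.eta]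
    exact ce₃.continuousOn.mul (cu₃.continuousOn.sub hu₃hat)
  have cB : ContinuousOn FB (Icc 0 1 ×ˢ Icc 0 T) := by
    rw [hFBdef]; simp only [Prod.mk.eta]
    apply ContinuousOn.add
    · apply Continuous.continuousOn; fun_prop
    · exact ce₃.continuousOn.mul (cu₃.continuousOn.sub hu₃hat)
  -- integrabilities
  have iA : Integrable (fun p : ℝ × ℝ => FA (p.2, p.1)) PM := keyInt FA cA.continuousOn
  have iB : Integrable (fun p : ℝ × ℝ => FB (p.2, p.1)) PM := keyInt FB cB
  have iG : Integrable (fun p : ℝ × ℝ => FG (p.2, p.1)) PM := keyInt FG cG.continuousOn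
  have iE : Integrable (fun p : ℝ × ℝ => FE (p.2, p.1)) PM := keyInt FE cE
  have iR : Integrable (fun p : ℝ × ℝ => FR (p.2, p.1)) PM := keyInt FR cR.continuousOn
  -- conversions to product integrals
  have hAconv : (∫ t in (0:ℝ)..T, ∫ x in (0:ℝ)..1, ((deriv (fun s => η₁ (x, s)) t - η₁ (x, t) * (1 - 2 * u₁ (x, t))
            + δ₁ * η₁ (x, t) * u₃ (x, t) + δ₁ * u₁ (x, t) * η₃ (x, t)) * lam₁ (x, t)
          + (deriv (fun s => η₂ (x, s)) t - ρ₂ * η₂ (x, t) * (1 - 2 * u₂ (x, t))) * lam₂ (x, t)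
          + (- D₂ * η₁ (x, t) * deriv (fun y => u₂ (y, t)) x
              + D₂ * (1 - u₁ (x, t)) * deriv (fun y => η₂ (y, t)) x)
            * deriv (fun y => lam₂ (y, t)) x
          + (deriv (fun s => η₃ (x, s)) t - δ₃ * (η₂ (x, t) - η₃ (x, t))) * lam₃ (x, t)
          + deriv (fun y => η₃ (y, t)) x * deriv (fun y => lam₃ (y, t)) x))
      = ∫ p, FA (p.2, p.1) ∂PM := convI c0T FA iA
  have hBconv : (∫ t in (0:ℝ)..T, ∫ x in (0:ℝ)..1, (- deriv (fun s => lam₁ (x, s)) t * η₁ (x, t)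
          - η₁ (x, t) * (1 - 2 * u₁ (x, t)) * lam₁ (x, t)
          + δ₁ * η₁ (x, t) * u₃ (x, t) * lam₁ (x, t)
          - D₂ * η₁ (x, t) * deriv (fun y => u₂ (y, t)) x * deriv (fun y => lam₂ (y, t)) x
          - deriv (fun s => lam₂ (x, s)) t * η₂ (x, t)
          - ρ₂ * η₂ (x, t) * (1 - 2 * u₂ (x, t)) * lam₂ (x, t)
          + D₂ * (1 - u₁ (x, t)) * deriv (fun y => lam₂ (y, t)) x
            * deriv (fun y => η₂ (y, t)) x
          - δ₃ * η₂ (x, t) * lam₃ (x, t)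
          - deriv (fun s => lam₃ (x, s)) t * η₃ (x, t)
          + δ₃ * η₃ (x, t) * lam₃ (x, t)
          + deriv (fun y => lam₃ (y, t)) x * deriv (fun y => η₃ (y, t)) x
          + δ₁ * u₁ (x, t) * η₃ (x, t) * lam₁ (x, t)
          + η₃ (x, t) * (u₃ (x, t) - u₃hat (x, t))))
      = ∫ p, FB (p.2, p.1) ∂PM := convI c0T FB iB
  have hEconv : (∫ t in (0:ℝ)..T, ∫ x in (0:ℝ)..1, η₃ (x, t) * (u₃ (x, t) - u₃hat (x, t)))
      = ∫ p, FE (p.2, p.1) ∂PM := convI c0T FE iE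
  have hRconv : (∫ t in (0:ℝ)..T, ∫ x in (0:ℝ)..1, u₁ (x, t) * u₃ (x, t) * lam₁ (x, t))
      = ∫ p, FR (p.2, p.1) ∂PM := convI c0T FR iR
  -- the two weak equations
  have hA := hlin lam₁ lam₂ lam₃ hlam₁ hlam₂ hlam₃ hlam1
  have hB := hadj η₁ η₂ η₃ hη₁ hη₂ hη₃ hη1
  have hA' : (∫ p, FA (p.2, p.1) ∂PM)
      = - ∫ t in (0:ℝ)..T, ∫ x in (0:ℝ)..1, u₁ (x, t) * u₃ (x, t) * lam₁ (x, t) :=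
    hAconv.symm.trans hA
  have hB' : (0:ℝ) = ∫ p, FB (p.2, p.1) ∂PM := hB.trans hBconv
  -- pointwise identity
  have hptw : ∀ q : ℝ × ℝ, FE q = FB q + (FG q - FA q) := by
    intro q
    simp only [hFAdef, hFBdef, hFGdef, hFEdef]
    ring
  have hsplit : (∫ p, FE (p.2, p.1) ∂PM)
      = (∫ p, FB (p.2, p.1) ∂PM) + ((∫ p, FG (p.2, p.1) ∂PM) - ∫ p, FA (p.2, p.1) ∂PM) := by
    have hfe : (fun p : ℝ × ℝ => FE (p.2, p.1))
        = fun p => FB (p.2, p.1) + (FG (p.2, p.1) - FA (p.2, p.1)) :=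
      funext fun p => hptw (p.2, p.1)
    have iGA : Integrable (fun p : ℝ × ℝ => FG (p.2, p.1) - FA (p.2, p.1)) PM := iG.sub iA
    rw [hfe, integral_add iB iGA, integral_sub iG iA]
  -- Fubini and FTC in time: the G-term vanishes
  have hG0 : (∫ p, FG (p.2, p.1) ∂PM) = 0 := by
    have h1 : (∫ p, FG (p.2, p.1) ∂PM) = ∫ t, ∫ x, FG (x, t) ∂μX ∂μT :=
      MeasureTheory.integral_prod _ iG
    have h2 : (∫ t, ∫ x, FG (x, t) ∂μX ∂μT) = ∫ x, ∫ t, FG (x, t) ∂μT ∂μX :=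
      MeasureTheory.integral_integral_swap (f := fun t x => FG (x, t)) iG
    rw [h1, h2, hμX]
    apply MeasureTheory.setIntegral_eq_zero_of_forall_eq_zero
    intro x hx'
    have hx : x ∈ Icc (0:ℝ) 1 := Ioc_subset_Icc_self hx'
    have hfromint : (∫ t, FG (x, t) ∂μT) = ∫ t in (0:ℝ)..T, FG (x, t) := by
      rw [hμT, intervalIntegral.integral_of_le c0T]
    rw [hfromint]
    have hderiv : ∀ t ∈ uIcc (0:ℝ) T, HasDerivAt
        (fun s => η₁ (x, s) * lam₁ (x, s) + η₂ (x, s) * lam₂ (x, s) + η₃ (x, s) * lam₃ (x, s))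
        (FG (x, t)) t := by
      intro t _
      exact (((hasDerivAtT' hη₁ x t).mul (hasDerivAtT' hlam₁ x t)).add
        ((hasDerivAtT' hη₂ x t).mul (hasDerivAtT' hlam₂ x t))).add
        ((hasDerivAtT' hη₃ x t).mul (hasDerivAtT' hlam₃ x t))
    have hint : IntervalIntegrable (fun t => FG (x, t)) volume 0 T :=
      (cG.comp (continuous_const.prodMk continuous_id)).intervalIntegrable 0 T
    rw [intervalIntegral.integral_eq_sub_of_hasDerivAt hderiv hint]
    obtain ⟨e1, e2, e3⟩ := hη0 x hx
    obtain ⟨l1, l2, l3⟩ := hlamT x hx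
    rw [e1, e2, e3, l1, l2, l3]
    ring
  linarith [hA', hB', hEconv, hRconv, hsplit, hG0]
end
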